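/- For every m ≥ 2 there exist real symmetric positive semidefinite matrices B_1,…,B_m with B_1 + ⋯ + B_m positive definite such that det(Σ_{j=1}^m x_j B_j) = c·e_2(x_1,…,x_m)·e_1(x_1,…,x_m)^{m−1} for some constant c > 0. -/

import Mathlib

open MvPolynomial

/-- The `k`-th elementary symmetric polynomial in the variables indexed by the finite set `S`. -/
noncomputable def esymmS {m : ℕ} (S : Finset (Fin m)) (k : ℕ) : MvPolynomial (Fin m) ℝ :=
  ∑ T ∈ S.powersetCard k, ∏ j ∈ T, X j

section Aux

open Finset Matrix

lemma two_e2 {ι : Type*} [DecidableEq ι] (s : Finset ι) (x : ι → ℝ) :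
    2 * ∑ T ∈ s.powersetCard 2, ∏ j ∈ T, x j
      = (∑ j ∈ s, x j)^2 - ∑ j ∈ s, (x j)^2 := by
  induction s using Finset.induction_on with
  | empty =>
    rw [show Finset.powersetCard 2 (∅ : Finset ι) = ∅ from
      Finset.powersetCard_eq_empty.2 (by simp)]
    simp
  | @insert a s ha ih =>
    have hdisj : Disjoint (s.powersetCard 2) ((s.powersetCard 1).image (insert a)) := by
      rw [Finset.disjoint_right]
      rintro T hT hT2
      obtain ⟨T', hT', rfl⟩ := Finset.mem_image.1 hT
      have := (Finset.mem_powersetCard.1 hT2).1 (Finset.mem_insert_self a T')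
      exact ha this
    rw [show (2:ℕ) = Nat.succ 1 from rfl, Finset.powersetCard_succ_insert ha,
      Finset.sum_union hdisj, Finset.sum_image ?hinj]
    case hinj =>
      intro T hT T' hT' h
      have hT1 : a ∉ T := fun hh => ha ((Finset.mem_powersetCard.1 hT).1 hh)
      have hT2 : a ∉ T' := fun hh => ha ((Finset.mem_powersetCard.1 hT').1 hh)
      have : (insert a T).erase a = (insert a T').erase a := by rw [h]
      rwa [Finset.erase_insert hT1, Finset.erase_insert hT2] at this
    have h2 : ∑ T ∈ s.powersetCard 1, ∏ j ∈ insert a T, x j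
        = x a * ∑ j ∈ s, x j := by
      calc ∑ T ∈ s.powersetCard 1, ∏ j ∈ insert a T, x j
          = ∑ T ∈ s.powersetCard 1, x a * ∏ j ∈ T, x j :=
            Finset.sum_congr rfl fun T hT =>
              Finset.prod_insert fun hh => ha ((Finset.mem_powersetCard.1 hT).1 hh)
        _ = x a * ∑ j ∈ s, x j := by
            rw [Finset.powersetCard_one, Finset.sum_map, Finset.mul_sum]
            simp
    rw [h2, Finset.sum_insert ha, Finset.sum_insert ha]
    nlinarith [ih]

variable {m : ℕ}

noncomputable def Bmat (m : ℕ) (j : Fin m) : Matrix (Fin (m+1)) (Fin (m+1)) ℝ :=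
  Matrix.of fun k l => (if k = l then (1:ℝ) else 0) + (if k = 0 ∧ l = j.succ then 1 else 0)
    + (if k = j.succ ∧ l = 0 then 1 else 0)

noncomputable def wv (m : ℕ) (x : Fin m → ℝ) : Fin (m+1) → ℝ := Fin.cases 0 x

noncomputable def Xmat (m : ℕ) (x : Fin m → ℝ) : Matrix (Fin (m+1)) (Fin 2) ℝ :=
  Matrix.of fun k i => if i = 0 then (if k = 0 then (1:ℝ) else 0) else wv m x k

noncomputable def Ymat (m : ℕ) (x : Fin m → ℝ) : Matrix (Fin 2) (Fin (m+1)) ℝ :=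
  Matrix.of fun i l => if i = 0 then wv m x l else (if l = 0 then (1:ℝ) else 0)

lemma sum_smul_Bmat (x : Fin m → ℝ) :
    ∑ j, x j • Bmat m j = (∑ j, x j) • (1 : Matrix (Fin (m+1)) (Fin (m+1)) ℝ)
      + Xmat m x * Ymat m x := by
  ext k l
  have hXY : (Xmat m x * Ymat m x) k l
      = (if k = 0 then wv m x l else 0) + (if l = 0 then wv m x k else 0) := by
    simp [Matrix.mul_apply, Xmat, Ymat, Fin.sum_univ_two, mul_comm]
  have hsum1 : ∀ l : Fin (m+1), ∑ j, x j * (if l = j.succ then (1:ℝ) else 0) = wv m x l := by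
    intro l
    induction l using Fin.cases with
    | zero => simp [wv, fun j : Fin m => (Fin.succ_ne_zero j).symm]
    | succ i => simp [Fin.succ_inj, wv, eq_comm]
  have e1 : ∀ j : Fin m, x j * Bmat m j k l
      = x j * (if k = l then 1 else 0)
        + ((if k = 0 then x j * (if l = j.succ then 1 else 0) else 0)
        + (if l = 0 then x j * (if k = j.succ then 1 else 0) else 0)) := by
    intro j
    simp only [Bmat, Matrix.of_apply]
    by_cases h1 : k = 0 <;> by_cases h2 : l = 0 <;> by_cases h3 : l = j.succ <;>
      by_cases h4 : k = j.succ <;>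
        simp [h1, h2, h3, h4, Fin.succ_ne_zero j, (Fin.succ_ne_zero j).symm]
  have epull : ∀ (c : Prop) [Decidable c] (f : Fin m → ℝ),
      ∑ j, (if c then f j else 0) = if c then ∑ j, f j else 0 := by
    intro c _ f; split <;> simp
  simp only [Matrix.sum_apply, Matrix.add_apply, Matrix.smul_apply, Matrix.one_apply,
    smul_eq_mul]
  rw [hXY, Finset.sum_congr rfl fun j _ => e1 j, Finset.sum_add_distrib,
    Finset.sum_add_distrib, epull, epull, ← Finset.sum_mul, hsum1, hsum1]

lemma det_sum_smul_Bmat (hm : 2 ≤ m) (x : Fin m → ℝ) (hs : (∑ j, x j) ≠ 0) :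
    (∑ j, x j • Bmat m j).det
      = (∑ j, x j)^(m+1) - (∑ j, x j)^(m-1) * ∑ j, (x j)^2 := by
  set s : ℝ := ∑ j, x j with hsdef
  set q : ℝ := ∑ j, (x j)^2 with hqdef
  rw [sum_smul_Bmat]
  have h1 : s • (1 : Matrix (Fin (m+1)) (Fin (m+1)) ℝ) + Xmat m x * Ymat m x
      = s • ((1 : Matrix (Fin (m+1)) (Fin (m+1)) ℝ) + (s⁻¹ • Xmat m x) * Ymat m x) := by
    rw [smul_add]
    congr 1
    rw [Matrix.smul_mul, smul_smul, mul_inv_cancel₀ hs, one_smul]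
  rw [h1, Matrix.det_smul, Matrix.det_one_add_mul_comm]
  have h2 : (1 : Matrix (Fin 2) (Fin 2) ℝ) + Ymat m x * (s⁻¹ • Xmat m x)
      = Matrix.of ![![1, s⁻¹ * q], ![s⁻¹, 1]] := by
    ext i jj
    fin_cases i <;> fin_cases jj <;>
      simp [Matrix.mul_apply, Xmat, Ymat, Matrix.one_apply, Fin.sum_univ_succ, wv,
        Fin.succ_ne_zero, hqdef, Finset.mul_sum, sq] <;>
      try (exact Finset.sum_congr rfl fun j _ => by ring)
  rw [h2, Matrix.det_fin_two_of]
  have h3 : s^(m+1) = s^(m-1) * s^2 := by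
    rw [← pow_add]; congr 1; omega
  simp only [Fintype.card_fin]
  field_simp
  rw [h3]
  ring

noncomputable def Pdet (m : ℕ) : MvPolynomial (Fin m) ℝ :=
  (∑ j, (X j : MvPolynomial (Fin m) ℝ) • (Bmat m j).map MvPolynomial.C).det

lemma eval_Pdet (x : Fin m → ℝ) : eval x (Pdet m) = (∑ j, x j • Bmat m j).det := by
  have h : ((∑ j, (X j : MvPolynomial (Fin m) ℝ) • (Bmat m j).map MvPolynomial.C).map (eval x))
      = ∑ j, x j • Bmat m j := by
    ext k l
    simp [Matrix.map_apply, Matrix.sum_apply]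
  rw [Pdet, RingHom.map_det, RingHom.mapMatrix_apply, h]

lemma Pdet_eq (hm : 2 ≤ m) :
    Pdet m = (∑ j, (X j : MvPolynomial (Fin m) ℝ))^(m+1)
      - (∑ j, (X j : MvPolynomial (Fin m) ℝ))^(m-1)
          * ∑ j, (X j : MvPolynomial (Fin m) ℝ)^2 := by
  have hS1 : (∑ j, (X j : MvPolynomial (Fin m) ℝ)) ≠ 0 := by
    intro h
    have h2 := congrArg (eval fun _ : Fin m => (1:ℝ)) h
    simp [Finset.card_univ] at h2
    omega
  apply mul_right_cancel₀ hS1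
  apply MvPolynomial.funext
  intro x
  have he : eval x (∑ j, (X j : MvPolynomial (Fin m) ℝ)) = ∑ j, x j := by simp
  have hq : eval x (∑ j, (X j : MvPolynomial (Fin m) ℝ)^2) = ∑ j, (x j)^2 := by simp
  simp only [_root_.map_mul, map_sub, map_pow, he, hq, eval_Pdet]
  by_cases hs : (∑ j, x j) = 0
  · rw [hs]; ring
  · rw [det_sum_smul_Bmat hm x hs]

variable {m : ℕ}


lemma Bmat_isSymm (j : Fin m) : (Bmat m j).IsSymm := by
  ext k l
  simp only [Matrix.transpose_apply, Bmat, Matrix.of_apply]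
  by_cases h1 : k = l <;> by_cases h2 : k = 0 <;> by_cases h3 : l = 0 <;>
    by_cases h4 : k = j.succ <;> by_cases h5 : l = j.succ <;>
      simp [h1, h2, h3, h4, h5, Fin.succ_ne_zero j, (Fin.succ_ne_zero j).symm, eq_comm]

lemma quad_Bmat (j : Fin m) (y : Fin (m+1) → ℝ) :
    y ⬝ᵥ (Bmat m j) *ᵥ y = (∑ k, (y k)^2) + 2 * (y 0 * y j.succ) := by
  have inner : ∀ k, ((Bmat m j) *ᵥ y) k
      = y k + (if k = 0 then y j.succ else 0) + (if k = j.succ then y 0 else 0) := by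
    intro k
    simp [Matrix.mulVec, dotProduct, Bmat, add_mul, Finset.sum_add_distrib, ite_and,
      ite_mul, Finset.sum_ite_eq, Finset.sum_ite_eq']
  simp only [dotProduct, inner]
  rw [Finset.sum_congr rfl fun k _ => mul_add (y k) _ _,
    Finset.sum_congr rfl fun k _ => congrArg (· + _) (mul_add (y k) _ _),
    Finset.sum_add_distrib, Finset.sum_add_distrib]
  simp [mul_ite, mul_zero, Finset.sum_ite_eq, Finset.sum_ite_eq', sq]
  ring

lemma dot_sum_mulVec {m : ℕ} (B : Fin m → Matrix (Fin (m+1)) (Fin (m+1)) ℝ)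
    (y : Fin (m+1) → ℝ) :
    y ⬝ᵥ (∑ j, B j) *ᵥ y = ∑ j : Fin m, y ⬝ᵥ (B j) *ᵥ y := by
  simp only [Matrix.mulVec, dotProduct, Matrix.sum_apply, Finset.sum_mul, Finset.mul_sum]
  rw [Finset.sum_congr rfl fun x _ => by rw [Finset.sum_comm], Finset.sum_comm]

lemma Bmat_posSemidef (j : Fin m) : (Bmat m j).PosSemidef := by
  rw [Matrix.posSemidef_iff_dotProduct_mulVec]
  constructor
  · rw [Matrix.IsHermitian, Matrix.conjTranspose]
    simpa [Matrix.IsSymm, show ⇑(starRingEnd ℝ) = id from funext fun _ => by simp, Matrix.map_id] using (Bmat_isSymm j)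
  · intro y
    simp only [star_trivial]
    rw [quad_Bmat]
    have h1 : (y 0)^2 + (y j.succ)^2 ≤ ∑ k, (y k)^2 := by
      have h2 := Finset.sum_le_sum_of_subset_of_nonneg
        (Finset.subset_univ ({0, j.succ} : Finset (Fin (m+1))))
        (fun i _ _ => sq_nonneg (y i))
      rwa [Finset.sum_pair (Fin.succ_ne_zero j).symm] at h2
    nlinarith [sq_nonneg (y 0 + y j.succ)]

lemma sum_Bmat_posDef (hm : 2 ≤ m) : (∑ j, Bmat m j).PosDef := by
  rw [Matrix.posDef_iff_dotProduct_mulVec]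
  constructor
  · rw [Matrix.IsHermitian, Matrix.conjTranspose_sum]
    refine Finset.sum_congr rfl fun j _ => ?_
    rw [Matrix.conjTranspose]
    simpa [Matrix.IsSymm, show ⇑(starRingEnd ℝ) = id from funext fun _ => by simp, Matrix.map_id] using (Bmat_isSymm j)
  · intro y hy
    simp only [star_trivial]
    rw [dot_sum_mulVec, Finset.sum_congr rfl fun j _ => quad_Bmat j y]
    have hexp : ∑ k, (y k)^2 = (y 0)^2 + ∑ j : Fin m, (y j.succ)^2 :=
      Fin.sum_univ_succ _
    set a := y 0
    set t := ∑ j : Fin m, y j.succ with ht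
    set r := ∑ j : Fin m, (y j.succ)^2 with hr
    have hval : ∑ j : Fin m, ((∑ k, (y k)^2) + 2 * (y 0 * y j.succ))
        = (m : ℝ) * (a^2 + r) + 2 * a * t := by
      rw [Finset.sum_add_distrib, Finset.sum_const, Finset.card_univ, Fintype.card_fin,
        hexp]
      have h2t : ∑ j : Fin m, 2 * (y 0 * y j.succ) = 2 * a * t := by
        rw [ht, Finset.mul_sum]
        exact Finset.sum_congr rfl fun j _ => by ring
      rw [h2t, nsmul_eq_mul]
    rw [hval]
    have hiden : (m : ℝ) * (a^2 + r) + 2 * a * t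
        = (∑ j : Fin m, (a + y j.succ)^2) + ((m : ℝ) - 1) * r := by
      have : ∑ j : Fin m, (a + y j.succ)^2
          = (m : ℝ) * a^2 + 2 * a * t + r := by
        rw [Finset.sum_congr rfl fun j _ => add_sq a (y j.succ),
          Finset.sum_add_distrib, Finset.sum_add_distrib, Finset.sum_const,
          Finset.card_univ, Fintype.card_fin, ht, hr, ← Finset.mul_sum]
        push_cast
        ring
      rw [this]
      ring
    rw [hiden]
    have hm1 : (1 : ℝ) ≤ (m : ℝ) - 1 := by
      have : (2 : ℝ) ≤ (m : ℝ) := by exact_mod_cast hm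
      linarith
    by_cases hu : ∀ j : Fin m, y j.succ = 0
    · have ha : a ≠ 0 := by
        intro ha0
        apply hy
        funext k
        induction k using Fin.cases with
        | zero => exact ha0
        | succ i => exact hu i
      have hr0 : r = 0 := by
        rw [hr]
        exact Finset.sum_eq_zero fun j _ => by rw [hu j]; ring
      have hsum : ∑ j : Fin m, (a + y j.succ)^2 = (m : ℝ) * a^2 := by
        rw [Finset.sum_congr rfl fun j _ => by rw [hu j, add_zero],
          Finset.sum_const, Finset.card_univ, Fintype.card_fin, nsmul_eq_mul]
      rw [hsum, hr0, mul_zero, add_zero]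
      have hapos : 0 < a^2 := by positivity
      exact mul_pos (by linarith) hapos
    · push_neg at hu
      obtain ⟨j0, hj0⟩ := hu
      have hrpos : 0 < r := by
        rw [hr]
        exact Finset.sum_pos' (fun j _ => sq_nonneg _)
          ⟨j0, Finset.mem_univ j0, by positivity⟩
      have h1 : 0 ≤ ∑ j : Fin m, (a + y j.succ)^2 :=
        Finset.sum_nonneg fun j _ => sq_nonneg _
      nlinarith

end Aux

open Finset in
/-- For every `m ≥ 2` there are symmetric PSD matrices `B_1,…,B_m` with positive definite
sum such that `det(Σ_j x_j B_j) = c·e_2(x)·e_1(x)^{m-1}` for some `c > 0`. -/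
theorem e2_determinantal (m : ℕ) (hm : 2 ≤ m) :
    ∃ (N : ℕ) (B : Fin m → Matrix (Fin N) (Fin N) ℝ) (c : ℝ),
      0 < c ∧ (∀ j, (B j).IsSymm) ∧ (∀ j, (B j).PosSemidef) ∧
      (∑ j, B j).PosDef ∧
      ∀ x : Fin m → ℝ,
        (∑ j, x j • B j).det =
          c * eval x (esymmS (Finset.univ : Finset (Fin m)) 2) *
            eval x (esymmS (Finset.univ : Finset (Fin m)) 1) ^ (m - 1) := by
  refine ⟨m + 1, Bmat m, 2, by norm_num, fun j => Bmat_isSymm j,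
    fun j => Bmat_posSemidef j, sum_Bmat_posDef hm, ?_⟩
  intro x
  have he1 : eval x (esymmS (Finset.univ : Finset (Fin m)) 1) = ∑ j, x j := by
    simp [esymmS, Finset.powersetCard_one]
  have he2 : eval x (esymmS (Finset.univ : Finset (Fin m)) 2)
      = ∑ T ∈ Finset.powersetCard 2 (Finset.univ : Finset (Fin m)), ∏ j ∈ T, x j := by
    simp [esymmS]
  have hdet : (∑ j, x j • Bmat m j).det
      = (∑ j, x j)^(m+1) - (∑ j, x j)^(m-1) * ∑ j, (x j)^2 := by
    rw [← eval_Pdet, Pdet_eq hm]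
    simp
  have h2 := two_e2 (Finset.univ : Finset (Fin m)) x
  have hp : (∑ j, x j)^(m+1) = (∑ j, x j)^2 * (∑ j, x j)^(m-1) := by
    rw [← pow_add]; congr 1; omega
  rw [hdet, he1, he2]
  linear_combination hp - (∑ j, x j)^(m-1) * h2
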